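/- Let a, b be odd integers with a ≥ 3, b ≥ 1, T the generalized Collatz map, and Ω a cycle of T with K odd and L even elements. Then 1 < 2^(K+L)/a^K, i.e., a^K < 2^(K+L). -/

import Mathlib

/-- For a cycle `Ω` of `T` with `K` odd and `L` even elements,
`a ^ K < 2 ^ (K + L)`. -/
theorem cycle_power_inequality
    (a b : ℤ) (ha : Odd a) (hb : Odd b) (ha3 : 3 ≤ a) (hb1 : 1 ≤ b)
    (T : ℤ → ℤ) (hT : ∀ n, T n = if n % 2 = 0 then n / 2 else (a * n + b) / 2)
    (Ω : Finset ℤ) (hpos : ∀ x ∈ Ω, 0 < x) (hcycle : Ω.image T = Ω)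
    (K L : ℕ) (hK : K = (Ω.filter (fun x => Odd x)).card)
    (hL : L = (Ω.filter (fun x => ¬ Odd x)).card) (hK1 : 1 ≤ K) :
    a ^ K < 2 ^ (K + L) := by
  classical
  have hinj : Set.InjOn T Ω := Finset.injOn_of_card_image_eq (by rw [hcycle])
  have hprodT : ∏ x ∈ Ω, T x = ∏ x ∈ Ω, x := by
    conv_rhs => rw [← hcycle]
    rw [Finset.prod_image (fun x hx y hy h => hinj hx hy h)]
  have hcard : Ω.card = K + L := by
    rw [hK, hL]
    exact (Finset.card_filter_add_card_filter_not (p := fun x => Odd x)).symm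
  have hodd : ∀ x ∈ Ω.filter (fun x => Odd x), 2 * T x = a * x + b := by
    intro x hx
    obtain ⟨hxΩ, hxo⟩ := Finset.mem_filter.mp hx
    have hx2 : x % 2 ≠ 0 := by
      rw [Int.odd_iff] at hxo; omega
    have heven : Even (a * x + b) := (ha.mul hxo).add_odd hb
    rw [hT, if_neg hx2]
    exact Int.two_mul_ediv_two_of_even heven
  have heven : ∀ x ∈ Ω.filter (fun x => ¬ Odd x), 2 * T x = x := by
    intro x hx
    obtain ⟨hxΩ, hxo⟩ := Finset.mem_filter.mp hx
    have hx2 : x % 2 = 0 := Int.even_iff.mp (Int.not_odd_iff_even.mp hxo)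
    rw [hT, if_pos hx2]
    exact Int.two_mul_ediv_two_of_even (Int.even_iff.mpr hx2)
  have key : ∏ x ∈ Ω, (2 * T x)
      = (∏ x ∈ Ω.filter (fun x => Odd x), (a * x + b))
        * ∏ x ∈ Ω.filter (fun x => ¬ Odd x), x := by
    rw [← Finset.prod_filter_mul_prod_filter_not Ω (fun x => Odd x) (fun x => 2 * T x)]
    congr 1
    · exact Finset.prod_congr rfl hodd
    · exact Finset.prod_congr rfl heven
  have lhs : ∏ x ∈ Ω, (2 * T x) = 2 ^ (K + L) * ∏ x ∈ Ω, x := by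
    rw [Finset.prod_mul_distrib, Finset.prod_const, hcard, hprodT]
  have hne : (Ω.filter (fun x => Odd x)).Nonempty := by
    rw [← Finset.card_pos, ← hK]; omega
  have hlt : a ^ K * ∏ x ∈ Ω.filter (fun x => Odd x), x
      < ∏ x ∈ Ω.filter (fun x => Odd x), (a * x + b) := by
    have h1 : a ^ K * ∏ x ∈ Ω.filter (fun x => Odd x), x
        = ∏ x ∈ Ω.filter (fun x => Odd x), (a * x) := by
      rw [Finset.prod_mul_distrib, Finset.prod_const, hK]
    rw [h1]
    refine Finset.prod_lt_prod_of_nonempty (fun i hi => ?_) (fun i hi => by linarith) hne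
    have := hpos i (Finset.mem_filter.mp hi).1
    nlinarith
  have hevenpos : 0 < ∏ x ∈ Ω.filter (fun x => ¬ Odd x), x :=
    Finset.prod_pos fun x hx => hpos x (Finset.mem_filter.mp hx).1
  have hΩpos : 0 < ∏ x ∈ Ω, x := Finset.prod_pos hpos
  have main : a ^ K * ∏ x ∈ Ω, x < 2 ^ (K + L) * ∏ x ∈ Ω, x := by
    rw [← lhs, key]
    have split : ∏ x ∈ Ω, x
        = (∏ x ∈ Ω.filter (fun x => Odd x), x) * ∏ x ∈ Ω.filter (fun x => ¬ Odd x), x :=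
      (Finset.prod_filter_mul_prod_filter_not Ω (fun x => Odd x) (fun x => x)).symm
    rw [split, ← mul_assoc]
    exact mul_lt_mul_of_pos_right hlt hevenpos
  exact (mul_lt_mul_iff_of_pos_right hΩpos).mp main
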